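/- Let σ ∈ S_k and τ ∈ S_n with σ ≤ τ, and suppose that σ occurs exactly once in τ, with occurrence ⟨σ⟩. If the pair (⟨σ⟩, τ) is separated, then the Möbius function of the interval [σ, τ] in the permutation pattern poset satisfies μ(σ, τ) = (−1)^{n−k}. -/

import Mathlib

/-- `f` gives an occurrence of the pattern `σ` in `τ`: the positions `f 0 < f 1 < ⋯`
carry letters of `τ` in the same relative order as `σ`. -/
def IsOccurrence {k n : ℕ} (σ : Equiv.Perm (Fin k)) (τ : Equiv.Perm (Fin n))
    (f : Fin k → Fin n) : Prop :=
  StrictMono f ∧ ∀ i j : Fin k, σ i < σ j ↔ τ (f i) < τ (f j)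

/-- Two sets of kept positions `S, S'` (each containing the marked positions `A`)
determine the same element of the occurrence poset: the words of `τ` read along `S`
and along `S'` are order isomorphic, with the marked positions corresponding. -/
def OccEquiv {n : ℕ} (τ : Equiv.Perm (Fin n)) (A S S' : Finset (Fin n)) : Prop :=
  ∃ g : {x // x ∈ S} ≃o {x // x ∈ S'},
    (∀ a b : {x // x ∈ S}, τ a.1 < τ b.1 ↔ τ (g a).1 < τ (g b).1) ∧
    (∀ a : {x // x ∈ S}, a.1 ∈ A ↔ (g a).1 ∈ A)

/-- Representatives of elements of the occurrence poset with marked positions `A`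
and ground set `U`: sets of kept positions between `A` and `U`. -/
def OccCarrier {n : ℕ} (A U : Finset (Fin n)) := {S : Finset (Fin n) // A ⊆ S ∧ S ⊆ U}

/-- The occurrence poset `[⟨σ⟩, τ]` (with ground set `U`): kept-position sets modulo
order isomorphism respecting the marked occurrence. -/
def OccPoset {n : ℕ} (τ : Equiv.Perm (Fin n)) (A U : Finset (Fin n)) :=
  Quot (fun S S' : OccCarrier A U => OccEquiv τ A S.1 S'.1)

def occMk {n : ℕ} (τ : Equiv.Perm (Fin n)) (A U : Finset (Fin n)) (S : OccCarrier A U) :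
    OccPoset τ A U :=
  Quot.mk _ S

/-- The partial order of the occurrence poset: deletion of unmarked letters. -/
def occLE {n : ℕ} (τ : Equiv.Perm (Fin n)) (A U : Finset (Fin n))
    (q q' : OccPoset τ A U) : Prop :=
  ∃ S S' : OccCarrier A U, q = occMk τ A U S ∧ q' = occMk τ A U S' ∧ S.1 ⊆ S'.1

/-- The bottom element `⟨σ⟩` of the occurrence poset. -/
def occBot {n : ℕ} (τ : Equiv.Perm (Fin n)) (A U : Finset (Fin n)) (h : A ⊆ U) :
    OccPoset τ A U :=
  occMk τ A U ⟨A, subset_rfl, h⟩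

/-- The top element `τ` of the occurrence poset. -/
def occTop {n : ℕ} (τ : Equiv.Perm (Fin n)) (A U : Finset (Fin n)) (h : A ⊆ U) :
    OccPoset τ A U :=
  occMk τ A U ⟨U, h, subset_rfl⟩

/-- `J` is an interval block of the pattern of `τ` restricted to the kept positions `S`:
`J` consists of at least two kept positions, consecutive among `S` both in position and
in value. -/
def IsBlockIn {n : ℕ} (τ : Equiv.Perm (Fin n)) (S J : Finset (Fin n)) : Prop :=
  J ⊆ S ∧ 2 ≤ J.card ∧
    (∀ x ∈ J, ∀ y ∈ J, ∀ z ∈ S, x ≤ z → z ≤ y → z ∈ J) ∧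
    (∀ x ∈ J, ∀ y ∈ J, ∀ z ∈ S, τ x ≤ τ z → τ z ≤ τ y → z ∈ J)

/-- The pair (marked occurrence `A`, permutation given by kept positions `S`) has an
interval block: an interval block disjoint from the occurrence. -/
def PairHasBlock {n : ℕ} (τ : Equiv.Perm (Fin n)) (A S : Finset (Fin n)) : Prop :=
  ∃ J : Finset (Fin n), IsBlockIn τ S J ∧ ∀ p ∈ J, p ∉ A

/-- An element of the occurrence poset is interval free if (a representative of) it has
no interval block disjoint from the marked occurrence. -/
def occIntervalFree {n : ℕ} (τ : Equiv.Perm (Fin n)) (A U : Finset (Fin n))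
    (q : OccPoset τ A U) : Prop :=
  ∃ S : OccCarrier A U, q = occMk τ A U S ∧ ¬ PairHasBlock τ A S.1

theorem OccEquiv.card_eq {n : ℕ} {τ : Equiv.Perm (Fin n)} {A S S' : Finset (Fin n)}
    (h : OccEquiv τ A S S') : S.card = S'.card := by
  obtain ⟨g, -, -⟩ := h
  simpa using Fintype.card_congr g.toEquiv

/-- The rank of an element of the occurrence poset: its number of letters minus `k`. -/
def occRank {n : ℕ} (τ : Equiv.Perm (Fin n)) (A U : Finset (Fin n)) (k : ℕ) :
    OccPoset τ A U → ℕ :=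
  Quot.lift (fun S => S.1.card - k) (fun S S' h => by
    have hc := OccEquiv.card_eq h
    show S.1.card - k = S'.1.card - k
    omega)

/-- Positions `p` and `q` lie in the same region: no position between them (inclusive)
is a marked position. -/
def SameRegion {n : ℕ} (A : Finset (Fin n)) (p q : Fin n) : Prop :=
  ∀ z : Fin n, min p q ≤ z → z ≤ max p q → z ∉ A

/-- The pair (occurrence with marked positions `A`, `τ`) is separated: any two letters in
the same region are separated in value by a letter of the occurrence. -/
def Separated {n : ℕ} (τ : Equiv.Perm (Fin n)) (A : Finset (Fin n)) : Prop :=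
  ∀ p q : Fin n, SameRegion A p q → τ p < τ q → ∃ a ∈ A, τ p < τ a ∧ τ a < τ q

/-- The letters at positions `p, q` (with `τ p < τ q`) are similar: same region, and no
letter of the occurrence lies strictly between them in value. -/
def SimilarPos {n : ℕ} (τ : Equiv.Perm (Fin n)) (A : Finset (Fin n)) (p q : Fin n) : Prop :=
  SameRegion A p q ∧ τ p < τ q ∧ ∀ a ∈ A, ¬ (τ p < τ a ∧ τ a < τ q)

/-- A group of similar letters: at least two letters, pairwise similar. -/
def IsSimilarGroup {n : ℕ} (τ : Equiv.Perm (Fin n)) (A : Finset (Fin n))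
    (G : Finset (Fin n)) : Prop :=
  2 ≤ G.card ∧ ∀ p ∈ G, ∀ q ∈ G, τ p < τ q → SimilarPos τ A p q

/-- A maximal group of similar letters: one contained in no strictly larger group. -/
def IsMaxSimilarGroup {n : ℕ} (τ : Equiv.Perm (Fin n)) (A : Finset (Fin n))
    (G : Finset (Fin n)) : Prop :=
  IsSimilarGroup τ A G ∧ ∀ G' : Finset (Fin n), IsSimilarGroup τ A G' → G ⊆ G' → G' = G

/-- The occurrence poset is a boolean algebra: isomorphic to the poset of all subsets of
a finite set, ordered by inclusion. -/
def IsBooleanOccPoset {n : ℕ} (τ : Equiv.Perm (Fin n)) (A U : Finset (Fin n)) : Prop :=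
  ∃ (m : ℕ) (e : OccPoset τ A U ≃ Finset (Fin m)),
    ∀ q q' : OccPoset τ A U, occLE τ A U q q' ↔ e q ⊆ e q'

/-- The pattern poset `P`: permutations of every length, a permutation of length `m` being
an element of `Equiv.Perm (Fin m)` (its standard form). -/
def PatternPoset := Σ m : ℕ, Equiv.Perm (Fin m)

/-- The order of the pattern poset: pattern containment. -/
def patternLE (a b : PatternPoset) : Prop :=
  ∃ f : Fin a.1 → Fin b.1, IsOccurrence a.2 b.2 f

/-- `b` covers `a` in the pattern poset: `a < b` and `b` has one letter more than `a`. -/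
def patternCovers (a b : PatternPoset) : Prop :=
  patternLE a b ∧ a ≠ b ∧ b.1 = a.1 + 1


namespace MobiusAux

open Finset

variable {n : ℕ}

noncomputable def stdFun {m : ℕ} (v : Fin m → Fin n) (hv : Function.Injective v) :
    Fin m → Fin m := fun i =>
  ((Finset.image v Finset.univ).orderIsoOfFin
    (by rw [Finset.card_image_of_injective _ hv, Finset.card_univ, Fintype.card_fin])).symm
    ⟨v i, Finset.mem_image_of_mem v (Finset.mem_univ i)⟩

lemma stdFun_lt {m : ℕ} (v : Fin m → Fin n) (hv : Function.Injective v) (i j : Fin m) :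
    stdFun v hv i < stdFun v hv j ↔ v i < v j := by
  unfold stdFun
  rw [OrderIso.lt_iff_lt, Subtype.mk_lt_mk]

lemma stdFun_injective {m : ℕ} (v : Fin m → Fin n) (hv : Function.Injective v) :
    Function.Injective (stdFun v hv) := by
  intro i j h
  apply hv
  rcases lt_trichotomy (v i) (v j) with h1 | h1 | h1
  · exact absurd ((stdFun_lt v hv i j).mpr h1) (by rw [h]; exact lt_irrefl _)
  · exact h1
  · exact absurd ((stdFun_lt v hv j i).mpr h1) (by rw [h]; exact lt_irrefl _)

noncomputable def std {m : ℕ} (v : Fin m → Fin n) (hv : Function.Injective v) :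
    Equiv.Perm (Fin m) :=
  Equiv.ofBijective (stdFun v hv) (Finite.injective_iff_bijective.mp (stdFun_injective v hv))

lemma std_lt {m : ℕ} (v : Fin m → Fin n) (hv : Function.Injective v) (i j : Fin m) :
    std v hv i < std v hv j ↔ v i < v j := stdFun_lt v hv i j

lemma perm_ext {m : ℕ} (π ρ : Equiv.Perm (Fin m)) (h : ∀ i j, π i < π j ↔ ρ i < ρ j) :
    π = ρ := by
  have hmono : StrictMono (fun a => π (ρ.symm a)) := by
    intro a b hab
    exact (h (ρ.symm a) (ρ.symm b)).mpr (by simpa using hab)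
  have hsurj : Function.Surjective (fun a => π (ρ.symm a)) :=
    (π.surjective).comp (ρ.symm.surjective)
  have := Subsingleton.elim (StrictMono.orderIsoOfSurjective _ hmono hsurj)
    (OrderIso.refl (Fin m))
  ext i
  have h2 := congrArg (fun (e : Fin m ≃o Fin m) => e (ρ i)) this
  simp only [StrictMono.coe_orderIsoOfSurjective] at h2
  exact congrArg Fin.val (by simpa using h2)

variable (τ : Equiv.Perm (Fin n))

/-- The pattern of `τ` restricted to positions `S`, as an element of the pattern poset. -/
noncomputable def patt (S : Finset (Fin n)) : PatternPoset :=
  ⟨S.card, std (fun i => τ (S.orderEmbOfFin rfl i))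
    (fun i j h => (S.orderEmbOfFin rfl).injective (τ.injective h))⟩

lemma patt_snd_lt (S : Finset (Fin n)) (i j : Fin S.card) :
    (patt τ S).2 i < (patt τ S).2 j ↔ τ (S.orderEmbOfFin rfl i) < τ (S.orderEmbOfFin rfl j) :=
  std_lt _ _ i j

lemma patt_occ (S : Finset (Fin n)) :
    IsOccurrence (patt τ S).2 τ (S.orderEmbOfFin rfl) :=
  ⟨(S.orderEmbOfFin rfl).strictMono, fun i j => patt_snd_lt τ S i j⟩

lemma occ_comp {k m : ℕ} {x : Equiv.Perm (Fin k)} {y : Equiv.Perm (Fin m)}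
    {g : Fin k → Fin m} {g' : Fin m → Fin n}
    (h1 : IsOccurrence x y g) (h2 : IsOccurrence y τ g') : IsOccurrence x τ (g' ∘ g) :=
  ⟨h2.1.comp h1.1, fun i j => (h1.2 i j).trans (h2.2 _ _)⟩

lemma patt_eq {S : Finset (Fin n)} {m : ℕ} {ρ : Equiv.Perm (Fin m)} (g : Fin m → Fin n)
    (hg : IsOccurrence ρ τ g) (hS : S = Finset.image g Finset.univ) :
    patt τ S = ⟨m, ρ⟩ := by
  have hinj := hg.1.injective
  have hcard : S.card = m := by
    rw [hS, card_image_of_injective _ hinj, card_univ, Fintype.card_fin]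
  subst hcard
  have hfs : ∀ x, g x ∈ S := fun x => by
    rw [hS]; exact mem_image_of_mem g (mem_univ x)
  have hge : g = S.orderEmbOfFin rfl := Finset.orderEmbOfFin_unique rfl hfs hg.1
  have : (patt τ S).2 = ρ := by
    apply perm_ext
    intro i j
    erw [patt_snd_lt]
    rw [← hge]
    exact (hg.2 i j).symm

  show (⟨S.card, (patt τ S).2⟩ : PatternPoset) = ⟨S.card, ρ⟩
  rw [this]

lemma occ_of_patt_eq {S : Finset (Fin n)} {m : ℕ} {ρ : Equiv.Perm (Fin m)}
    (h : patt τ S = ⟨m, ρ⟩) :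
    ∃ hc : S.card = m, IsOccurrence ρ τ (S.orderEmbOfFin hc) := by
  have h1 : S.card = m := congrArg Sigma.fst h
  subst h1
  have h2 : (patt τ S).2 = ρ := by
    obtain ⟨h1', h2'⟩ := Sigma.ext_iff.mp h
    exact eq_of_heq h2'
  exact ⟨rfl, h2 ▸ patt_occ τ S⟩

lemma patt_le {T T' : Finset (Fin n)} (hTT' : T ⊆ T') :
    patternLE (patt τ T) (patt τ T') := by
  refine ⟨fun i => (T'.orderIsoOfFin rfl).symm
      ⟨T.orderEmbOfFin rfl i, hTT' (Finset.orderEmbOfFin_mem T rfl i)⟩, ?_, ?_⟩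
  · intro i j hij
    dsimp only
    exact ((T'.orderIsoOfFin rfl).symm.lt_iff_lt).mpr
      (Subtype.mk_lt_mk.mpr ((T.orderEmbOfFin rfl).strictMono hij))
  · intro i j
    have key : ∀ i : Fin T.card, T'.orderEmbOfFin rfl ((T'.orderIsoOfFin rfl).symm
        ⟨T.orderEmbOfFin rfl i, hTT' (Finset.orderEmbOfFin_mem T rfl i)⟩)
        = T.orderEmbOfFin rfl i := by
      intro i
      rw [← Finset.coe_orderIsoOfFin_apply, OrderIso.apply_symm_apply]
    dsimp only
    erw [patt_snd_lt, patt_snd_lt, key i, key j]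

lemma sameRegion_symm {A : Finset (Fin n)} {p q : Fin n} (h : SameRegion A p q) :
    SameRegion A q p := by
  intro z h1 h2
  exact h z (by rwa [min_comm]) (by rwa [max_comm])

lemma occ_unique {k : ℕ} (σ : Equiv.Perm (Fin k)) (f : Fin k → Fin n)
    (hf : IsOccurrence σ τ f)
    (huniq : ∀ g, IsOccurrence σ τ g → g = f) (A : Finset (Fin n))
    (hA : A = Finset.image f Finset.univ) (hsep : Separated τ A)
    {m : ℕ} {x : Equiv.Perm (Fin m)} {g g' : Fin m → Fin n}
    (hg : IsOccurrence x τ g) (hg' : IsOccurrence x τ g')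
    (hAg : ∀ i, ∃ j, g j = f i) (hAg' : ∀ i, ∃ j, g' j = f i) : g = g' := by
  choose h hhspec using hAg
  choose h' hh'spec using hAg'
  have hocc_h : IsOccurrence σ x h := by
    constructor
    · intro i j hij
      have : g (h i) < g (h j) := by rw [hhspec, hhspec]; exact hf.1 hij
      exact hg.1.lt_iff_lt.mp this
    · intro i j
      rw [hf.2, ← hhspec i, ← hhspec j]
      exact (hg.2 (h i) (h j)).symm
  have hocc_h' : IsOccurrence σ x h' := by
    constructor
    · intro i j hij
      have : g' (h' i) < g' (h' j) := by rw [hh'spec, hh'spec]; exact hf.1 hij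
      exact hg'.1.lt_iff_lt.mp this
    · intro i j
      rw [hf.2, ← hh'spec i, ← hh'spec j]
      exact (hg'.2 (h' i) (h' j)).symm
  have hx_uniq : ∀ h'' : Fin k → Fin m, IsOccurrence σ x h'' → h'' = h := by
    intro h'' hocc
    have hcomp : IsOccurrence σ τ (g ∘ h'') := occ_comp τ hocc hg
    have hgf := huniq _ hcomp
    funext i
    apply hg.1.injective
    show g (h'' i) = g (h i)
    rw [hhspec]
    exact congrFun hgf i
  have hh'h : h' = h := hx_uniq h' hocc_h'
  have hg'h : ∀ i, g' (h i) = f i := by rw [← hh'h]; exact hh'spec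
  funext j
  by_cases hj : ∃ i, h i = j
  · obtain ⟨i, rfl⟩ := hj
    rw [hhspec, hg'h]
  · push_neg at hj
    have hne1 : ∀ i, g j ≠ f i := by
      intro i e
      exact hj i (hg.1.injective (by rw [hhspec, ← e]))
    have hne2 : ∀ i, g' j ≠ f i := by
      intro i e
      exact hj i (hg'.1.injective (by rw [hg'h, ← e]))
    have hpos : ∀ i, (g j < f i ↔ g' j < f i) := by
      intro i
      have e1 : g j < f i ↔ j < h i := by rw [← hhspec i]; exact hg.1.lt_iff_lt
      have e2 : g' j < f i ↔ j < h i := by rw [← hg'h i]; exact hg'.1.lt_iff_lt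
      rw [e1, e2]
    have hval : ∀ i, (τ (g j) < τ (f i) ↔ τ (g' j) < τ (f i)) := by
      intro i
      have e1 : τ (g j) < τ (f i) ↔ x j < x (h i) := by
        rw [← hhspec i]; exact (hg.2 j (h i)).symm
      have e2 : τ (g' j) < τ (f i) ↔ x j < x (h i) := by
        rw [← hg'h i]; exact (hg'.2 j (h i)).symm
      rw [e1, e2]
    have hregion : SameRegion A (g j) (g' j) := by
      intro z hz1 hz2 hzA
      rw [hA] at hzA
      obtain ⟨i, -, rfl⟩ := Finset.mem_image.mp hzA
      rcases lt_or_gt_of_ne (hne1 i) with hlt | hgt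
      · have hlt' : g' j < f i := (hpos i).mp hlt
        exact absurd (lt_of_le_of_lt hz2 (max_lt hlt hlt')) (lt_irrefl _)
      · have hgt' : f i < g' j := by
          have hnl : ¬ g' j < f i := fun c => absurd ((hpos i).mpr c) (not_lt.mpr hgt.le)
          exact lt_of_le_of_ne (not_lt.mp hnl) (fun e => hne2 i e.symm)
        exact absurd (lt_of_le_of_lt' hz1 (lt_min hgt hgt')) (lt_irrefl _)
    by_contra hne
    have hτne : τ (g j) ≠ τ (g' j) := fun e => hne (τ.injective e)
    rcases lt_or_gt_of_ne hτne with hlt | hgt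
    · obtain ⟨a, haA, ha1, ha2⟩ := hsep _ _ hregion hlt
      rw [hA] at haA
      obtain ⟨i, -, rfl⟩ := Finset.mem_image.mp haA
      exact absurd ((hval i).mp ha1) (not_lt.mpr ha2.le)
    · obtain ⟨a, haA, ha1, ha2⟩ := hsep _ _ (sameRegion_symm hregion) hgt
      rw [hA] at haA
      obtain ⟨i, -, rfl⟩ := Finset.mem_image.mp haA
      exact absurd ((hval i).mpr ha1) (not_lt.mpr ha2.le)

lemma mem_range_orderEmbOfFin {T : Finset (Fin n)} {m : ℕ} (hc : T.card = m) {t : Fin n}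
    (ht : t ∈ T) : ∃ j : Fin m, T.orderEmbOfFin hc j = t := by
  have : t ∈ Set.range (T.orderEmbOfFin hc) := by
    rw [Finset.range_orderEmbOfFin]; exact_mod_cast ht
  exact this

lemma patt_inj {k : ℕ} (σ : Equiv.Perm (Fin k)) (f : Fin k → Fin n)
    (hf : IsOccurrence σ τ f) (huniq : ∀ g, IsOccurrence σ τ g → g = f)
    (A : Finset (Fin n)) (hA : A = Finset.image f Finset.univ) (hsep : Separated τ A)
    {T T' : Finset (Fin n)} (hAT : A ⊆ T) (hAT' : A ⊆ T')
    (h : patt τ T = patt τ T') : T = T' := by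
  have h' : patt τ T' = ⟨T.card, (patt τ T).2⟩ := h.symm
  obtain ⟨hc, hocc'⟩ := occ_of_patt_eq τ h'
  have hoccT := patt_occ τ T
  have hmemA : ∀ i, ∃ j : Fin T.card, T.orderEmbOfFin rfl j = f i := fun i =>
    mem_range_orderEmbOfFin rfl
      (hAT (by rw [hA]; exact Finset.mem_image_of_mem f (Finset.mem_univ i)))
  have hmemA' : ∀ i, ∃ j : Fin T.card, T'.orderEmbOfFin hc j = f i := fun i =>
    mem_range_orderEmbOfFin hc
      (hAT' (by rw [hA]; exact Finset.mem_image_of_mem f (Finset.mem_univ i)))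
  have heq := occ_unique τ σ f hf huniq A hA hsep hoccT hocc' hmemA hmemA'
  apply Finset.coe_injective
  rw [← Finset.range_orderEmbOfFin T rfl, ← Finset.range_orderEmbOfFin T' hc, heq]

lemma mu_patt {k : ℕ} (σ : Equiv.Perm (Fin k)) (f : Fin k → Fin n)
    (hf : IsOccurrence σ τ f) (huniq : ∀ g, IsOccurrence σ τ g → g = f)
    (A : Finset (Fin n)) (hA : A = Finset.image f Finset.univ) (hsep : Separated τ A)
    (mu : PatternPoset → PatternPoset → ℤ)
    (hone : ∀ a, mu a a = 1)
    (hrec : ∀ a b, patternLE a b → a ≠ b →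
      mu a b = - ∑ᶠ x ∈ {x : PatternPoset | patternLE a x ∧ patternLE x b ∧ x ≠ b}, mu a x) :
    ∀ S : Finset (Fin n), A ⊆ S → mu ⟨k, σ⟩ (patt τ S) = (-1 : ℤ) ^ (S.card - k) := by
  classical
  have hfinj := hf.1.injective
  have hcardA : A.card = k := by
    rw [hA, card_image_of_injective _ hfinj, card_univ, Fintype.card_fin]
  have hpattA : patt τ A = ⟨k, σ⟩ := patt_eq τ f hf hA
  intro S
  induction S using Finset.strongInduction with
  | _ S ih =>
  intro hAS
  by_cases hSA : S = A
  · subst hSA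
    rw [hpattA]; erw [hone]; rw [hcardA, Nat.sub_self, pow_zero]
  · have hssub : A ⊂ S := ssubset_of_subset_of_ne hAS (Ne.symm hSA)
    have hcards : k < S.card := hcardA ▸ Finset.card_lt_card hssub
    have hle : patternLE ⟨k, σ⟩ (patt τ S) := by rw [← hpattA]; exact patt_le τ hAS
    have hneq : (⟨k, σ⟩ : PatternPoset) ≠ patt τ S := by
      intro e
      have hfst : k = S.card := congrArg Sigma.fst e
      omega
    rw [hrec _ _ hle hneq]
    set F : Finset (Finset (Fin n)) :=
      (S.powerset.filter (fun T => A ⊆ T)).erase S with hF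
    have hmemF : ∀ T, T ∈ F ↔ (A ⊆ T ∧ T ⊆ S ∧ T ≠ S) := by
      intro T
      simp only [hF, Finset.mem_erase, Finset.mem_filter, Finset.mem_powerset]
      tauto
    have hsetI : {x : PatternPoset |
        patternLE ⟨k, σ⟩ x ∧ patternLE x (patt τ S) ∧ x ≠ patt τ S}
        = ↑(F.image (patt τ)) := by
      ext x
      simp only [Set.mem_setOf_eq, Finset.coe_image, Set.mem_image, Finset.mem_coe]
      constructor
      · rintro ⟨h1, h2, h3⟩
        obtain ⟨gx, hgx⟩ := h2
        have hocc : IsOccurrence x.2 τ (S.orderEmbOfFin rfl ∘ gx) :=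
          occ_comp τ hgx (patt_occ τ S)
        have hpT : patt τ (Finset.image (S.orderEmbOfFin rfl ∘ gx) Finset.univ) = x :=
          patt_eq τ _ hocc rfl
        obtain ⟨g0, hg0⟩ := h1
        have hcomp : IsOccurrence σ τ ((S.orderEmbOfFin rfl ∘ gx) ∘ g0) :=
          occ_comp τ hg0 hocc
        have hfg := huniq _ hcomp
        refine ⟨Finset.image (S.orderEmbOfFin rfl ∘ gx) Finset.univ, ?_, hpT⟩
        rw [hmemF]
        refine ⟨?_, ?_, ?_⟩
        · rw [hA]
          intro a ha
          obtain ⟨i, -, rfl⟩ := Finset.mem_image.mp ha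
          exact Finset.mem_image.mpr ⟨g0 i, Finset.mem_univ _, congrFun hfg i⟩
        · intro t ht
          obtain ⟨i, -, rfl⟩ := Finset.mem_image.mp ht
          exact Finset.orderEmbOfFin_mem S rfl (gx i)
        · intro e
          exact h3 (by rw [← hpT, e])
      · rintro ⟨T, hT, rfl⟩
        rw [hmemF] at hT
        obtain ⟨hAT, hTS, hTneS⟩ := hT
        refine ⟨by rw [← hpattA]; exact patt_le τ hAT, patt_le τ hTS, ?_⟩
        intro e
        have hfst : T.card = S.card := congrArg Sigma.fst e
        have := Finset.card_lt_card (ssubset_of_subset_of_ne hTS hTneS)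
        omega
    rw [hsetI, finsum_mem_coe_finset, Finset.sum_image (fun T hT T' hT' hEq =>
      patt_inj τ σ f hf huniq A hA hsep ((hmemF T).mp hT).1 ((hmemF T').mp hT').1 hEq)]
    have hsum : ∀ T ∈ F, mu ⟨k, σ⟩ (patt τ T) = (-1 : ℤ) ^ (T.card - k) := by
      intro T hT
      rw [hmemF] at hT
      exact ih T (ssubset_of_subset_of_ne hT.2.1 hT.2.2) hT.1
    rw [Finset.sum_congr rfl hsum]
    have hG : (S.powerset.filter (fun T => A ⊆ T))
        = (S \ A).powerset.image (fun B => A ∪ B) := by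
      ext T
      simp only [Finset.mem_filter, Finset.mem_powerset, Finset.mem_image]
      constructor
      · rintro ⟨hTS, hAT⟩
        refine ⟨T \ A, fun t ht => ?_, Finset.union_sdiff_of_subset hAT⟩
        rw [Finset.mem_sdiff] at ht ⊢
        exact ⟨hTS ht.1, ht.2⟩
      · rintro ⟨B, hB, rfl⟩
        exact ⟨Finset.union_subset hAS (hB.trans Finset.sdiff_subset),
          Finset.subset_union_left⟩
    have hdisj : ∀ B ∈ (S \ A).powerset, Disjoint A B := by
      intro B hB
      rw [Finset.mem_powerset] at hB
      exact (Finset.sdiff_disjoint.mono_left hB).symm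
    have hinj2 : ∀ B ∈ (S \ A).powerset, ∀ B' ∈ (S \ A).powerset,
        A ∪ B = A ∪ B' → B = B' := by
      intro B hB B' hB' hE
      rw [← Finset.union_sdiff_cancel_left (hdisj B hB),
        ← Finset.union_sdiff_cancel_left (hdisj B' hB'), hE]
    have hsum0 : ∑ T ∈ (S.powerset.filter (fun T => A ⊆ T)),
        (-1 : ℤ) ^ (T.card - k) = 0 := by
      rw [hG, Finset.sum_image hinj2]
      rw [Finset.sum_congr rfl (fun B hB => by
        rw [Finset.card_union_of_disjoint (hdisj B hB), hcardA, Nat.add_sub_cancel_left])]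
      exact Finset.sum_powerset_neg_one_pow_card_of_nonempty
        (Finset.sdiff_nonempty.mpr (fun hs => hSA (Finset.Subset.antisymm hs hAS)))
    have hSG : S ∈ S.powerset.filter (fun T => A ⊆ T) := by
      simp [Finset.mem_powerset, hAS]
    have hkey : ∑ T ∈ F, (-1 : ℤ) ^ (T.card - k) = - (-1 : ℤ) ^ (S.card - k) := by
      have hadd := Finset.add_sum_erase _ (fun T => (-1 : ℤ) ^ (T.card - k)) hSG
      rw [hF]
      rw [hsum0] at hadd
      linarith
    rw [hkey, neg_neg]

end MobiusAux

/-- if `σ` occurs exactly once in `τ`, with occurrence `⟨σ⟩`, and the pair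
`(⟨σ⟩, τ)` is separated, then `μ(σ, τ) = (-1) ^ (n - k)` in the pattern poset. -/
theorem mobius_pattern_poset_separated_single_occurrence {k n : ℕ} (hk : 0 < k)
    (σ : Equiv.Perm (Fin k)) (τ : Equiv.Perm (Fin n))
    (f : Fin k → Fin n) (hf : IsOccurrence σ τ f)
    (huniq : ∀ g : Fin k → Fin n, IsOccurrence σ τ g → g = f)
    (A : Finset (Fin n)) (hA : A = Finset.image f Finset.univ)
    (hsep : Separated τ A)
    (mu : PatternPoset → PatternPoset → ℤ)
    (hone : ∀ a, mu a a = 1)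
    (hzero : ∀ a b, ¬ patternLE a b → mu a b = 0)
    (hrec : ∀ a b, patternLE a b → a ≠ b →
      mu a b = - ∑ᶠ x ∈ {x : PatternPoset | patternLE a x ∧ patternLE x b ∧ x ≠ b}, mu a x) :
    mu ⟨k, σ⟩ ⟨n, τ⟩ = (-1 : ℤ) ^ (n - k) := by
  have hpattU : MobiusAux.patt τ Finset.univ = ⟨n, τ⟩ :=
    MobiusAux.patt_eq τ id ⟨strictMono_id, fun i j => Iff.rfl⟩ (by simp)
  have := MobiusAux.mu_patt τ σ f hf huniq A hA hsep mu hone hrec Finset.univ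
    (Finset.subset_univ A)
  rw [hpattU] at this
  rwa [Finset.card_univ, Fintype.card_fin] at this
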